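/- On V^{⊗(n+1)}, the identity (Aₙ⊗1)R_{1,n+1}⋯R_{n,n+1}(Aₙ⊗1) = s·M_{n+1}(Aₙ⊗1) holds, where M = diag((rs)^{n−1}, (rs)^{n−2}, …, 1) acts in the last factor. -/

import Mathlib

noncomputable def Rmat (n : ℕ) (r s : ℂ) :
    Matrix (Fin n × Fin n) (Fin n × Fin n) ℂ := fun p q =>
  (if q = p then (if p.1 = p.2 then s else if p.2 < p.1 then r * s else 1) else 0)
    + (if q = (p.2, p.1) ∧ p.2 < p.1 then s - r else 0)

/-- The length (number of inversions) of a permutation of `Fin n`. -/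
def invNum {n : ℕ} (σ : Equiv.Perm (Fin n)) : ℕ :=
  (Finset.univ.filter fun p : Fin n × Fin n => p.1 < p.2 ∧ σ p.2 < σ p.1).card

/-- The two-parameter factorial `[n]_{r,s}! = Π_{k=1}^n (s^k - r^k)/(s - r)`. -/
noncomputable def qfact (n : ℕ) (r s : ℂ) : ℂ :=
  ∏ k ∈ Finset.range n, (s ^ (k + 1) - r ^ (k + 1)) / (s - r)

/-- The antisymmetric covector `⟨ε|`. -/
noncomputable def epsCov (n : ℕ) (r s : ℂ) : (Fin n → Fin n) → ℂ := fun f =>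
  (qfact n r s)⁻¹ *
    ∑ σ : Equiv.Perm (Fin n), if f = ⇑σ then (-s) ^ invNum σ else 0

/-- The antisymmetric vector `|ε⟩`. -/
noncomputable def epsVec (n : ℕ) (r s : ℂ) : (Fin n → Fin n) → ℂ := fun f =>
  r ^ (n * (n - 1) / 2) *
    ∑ σ : Equiv.Perm (Fin n), if f = ⇑σ then ((-r) ^ invNum σ)⁻¹ else 0

/-- `Aₙ ⊗ 1` on `V^{⊗(n+1)}`: the rank-one antisymmetrizer `|ε⟩⟨ε|` on the
first `n` tensor factors, identity on the last. -/
noncomputable def AmatExt (n : ℕ) (r s : ℂ) :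
    Matrix (Fin (n + 1) → Fin n) (Fin (n + 1) → Fin n) ℂ := fun f g =>
  epsVec n r s (f ∘ Fin.castSucc) * epsCov n r s (g ∘ Fin.castSucc) *
    (if f (Fin.last n) = g (Fin.last n) then 1 else 0)

/-- A matrix on `V ⊗ V` acting at two distinct tensor positions `p, q` of a
tensor power of `V` indexed by `ι`. -/
noncomputable def liftTwo {n : ℕ} {ι : Type*} [Fintype ι] [DecidableEq ι]
    (p q : ι) (B : Matrix (Fin n × Fin n) (Fin n × Fin n) ℂ) :
    Matrix (ι → Fin n) (ι → Fin n) ℂ := fun f g =>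
  B (f p, f q) (g p, g q) *
    ∏ x : ι, if x = p ∨ x = q then 1 else if f x = g x then 1 else 0

/-- `M_{n+1} = 1^{⊗n} ⊗ M` with `M = diag((rs)^{n-1}, (rs)^{n-2}, …, 1)`,
acting in the last tensor factor of `V^{⊗(n+1)}`. -/
noncomputable def MmatExt (n : ℕ) (r s : ℂ) :
    Matrix (Fin (n + 1) → Fin n) (Fin (n + 1) → Fin n) ℂ := fun f g =>
  if f = g then (r * s) ^ (n - 1 - (f (Fin.last n) : ℕ)) else 0

open Finset Equiv

/-- Insert the largest value at position `j`. -/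
def insPerm {n : ℕ} (j : Fin (n+1)) (e : Equiv.Perm (Fin n)) :
    Equiv.Perm (Fin (n+1)) :=
  (finSuccEquiv' j).trans ((Equiv.optionCongr e).trans (finSuccEquiv' (Fin.last n)).symm)

lemma insPerm_self {n : ℕ} (j : Fin (n+1)) (e : Equiv.Perm (Fin n)) :
    insPerm j e j = Fin.last n := by
  simp [insPerm]

lemma insPerm_succAbove {n : ℕ} (j : Fin (n+1)) (e : Equiv.Perm (Fin n)) (m : Fin n) :
    insPerm j e (j.succAbove m) = Fin.castSucc (e m) := by
  simp [insPerm, ← Fin.succAbove_last]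

lemma insPerm_bijective {n : ℕ} :
    Function.Bijective (fun p : Fin (n+1) × Equiv.Perm (Fin n) => insPerm p.1 p.2) := by
  rw [Fintype.bijective_iff_injective_and_card]
  constructor
  · rintro ⟨j, e⟩ ⟨j', e'⟩ h
    simp only at h
    have hj : j = j' := by
      have h1 := insPerm_self j e
      rw [h] at h1
      exact (insPerm j' e').injective (h1.trans (insPerm_self j' e').symm)
    subst hj
    have he : e = e' := by
      ext m
      have h2 : insPerm j e (j.succAbove m) = insPerm j e' (j.succAbove m) := by rw [h]
      rw [insPerm_succAbove, insPerm_succAbove] at h2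
      exact congrArg Fin.val (Fin.castSucc_injective _ h2)
    rw [he]
  · simp [Fintype.card_perm, Nat.factorial_succ]

lemma card_le_filter {n : ℕ} (c : ℕ) :
    (Finset.univ.filter fun b : Fin n => c ≤ (b : ℕ)).card = n - c := by
  rw [← Nat.card_Ico c n]
  apply Finset.card_nbij (i := Fin.val)
  · intro b hb
    replace hb : c ≤ (b : ℕ) := by simpa using hb
    simp only [Finset.coe_Ico, Set.mem_Ico]
    exact ⟨hb, b.isLt⟩
  · exact Fin.val_injective.injOn
  · intro x hx
    simp only [Finset.coe_Ico, Set.mem_Ico] at hx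
    exact ⟨⟨x, hx.2⟩, by simp [hx.1], rfl⟩

lemma invNum_insPerm {n : ℕ} (j : Fin (n+1)) (e : Equiv.Perm (Fin n)) :
    invNum (insPerm j e) = invNum e + (n - (j : ℕ)) := by
  classical
  set σ' := insPerm j e with hσ'
  set F : Fin (n+1) → Fin (n+1) → ℕ :=
    fun x y => if x < y ∧ σ' y < σ' x then 1 else 0 with hF
  have hL : invNum σ' = ∑ x : Fin (n+1), ∑ y : Fin (n+1), F x y := by
    rw [invNum, Finset.card_filter, Fintype.sum_prod_type]
  have step1 : ∑ x : Fin (n+1), ∑ y : Fin (n+1), F x y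
      = ∑ o₁ : Option (Fin n), ∑ o₂ : Option (Fin n),
          F ((finSuccEquiv' j).symm o₁) ((finSuccEquiv' j).symm o₂) := by
    rw [← Equiv.sum_comp (finSuccEquiv' j).symm (fun x => ∑ y : Fin (n+1), F x y)]
    exact Finset.sum_congr rfl fun o _ => (Equiv.sum_comp (finSuccEquiv' j).symm _).symm
  have hnone : ∀ o, F ((finSuccEquiv' j).symm o) ((finSuccEquiv' j).symm none)
      = 0 := by
    intro o
    cases o with
    | none => simp [hF]
    | some a =>
        simp only [finSuccEquiv'_symm_none, finSuccEquiv'_symm_some, hF, hσ']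
        rw [if_neg]
        rintro ⟨-, hlt⟩
        rw [insPerm_self, insPerm_succAbove] at hlt
        exact absurd hlt (Fin.not_lt.mpr (Fin.le_last _))
  have hsome_none : ∀ b : Fin n, F ((finSuccEquiv' j).symm none) ((finSuccEquiv' j).symm (some b))
      = if (j : ℕ) ≤ (b : ℕ) then 1 else 0 := by
    intro b
    simp only [finSuccEquiv'_symm_none, finSuccEquiv'_symm_some, hF, hσ']
    congr 1
    rw [insPerm_self, insPerm_succAbove]
    simp only [eq_iff_iff]
    constructor
    · rintro ⟨h1, -⟩
      rw [Fin.lt_succAbove_iff_le_castSucc] at h1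
      exact h1
    · intro hle
      exact ⟨(Fin.lt_succAbove_iff_le_castSucc j b).mpr hle, Fin.castSucc_lt_last _⟩
  have hsome_some : ∀ a b : Fin n,
      F ((finSuccEquiv' j).symm (some a)) ((finSuccEquiv' j).symm (some b))
      = if a < b ∧ e b < e a then 1 else 0 := by
    intro a b
    simp only [finSuccEquiv'_symm_some, hF, hσ', insPerm_succAbove]
    congr 1
    simp only [eq_iff_iff, Fin.succAbove_lt_succAbove_iff, Fin.castSucc_lt_castSucc_iff]
  rw [hL, step1, Fintype.sum_option]
  have e1 : ∑ o₂ : Option (Fin n), F ((finSuccEquiv' j).symm none) ((finSuccEquiv' j).symm o₂)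
      = n - (j : ℕ) := by
    rw [Fintype.sum_option, hnone none, zero_add]
    have : ∀ b : Fin n, F ((finSuccEquiv' j).symm none) ((finSuccEquiv' j).symm (some b))
        = if (j : ℕ) ≤ (b : ℕ) then 1 else 0 := hsome_none
    rw [Finset.sum_congr rfl fun b _ => this b, ← Finset.card_filter, card_le_filter]
  rw [e1]
  have e2 : ∑ a : Fin n, ∑ o₂ : Option (Fin n),
      F ((finSuccEquiv' j).symm (some a)) ((finSuccEquiv' j).symm o₂) = invNum e := by
    have h3 : ∀ a : Fin n, ∑ o₂ : Option (Fin n),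
        F ((finSuccEquiv' j).symm (some a)) ((finSuccEquiv' j).symm o₂)
        = ∑ b : Fin n, if a < b ∧ e b < e a then 1 else 0 := by
      intro a
      rw [Fintype.sum_option, hnone (some a), zero_add]
      exact Finset.sum_congr rfl fun b _ => hsome_some a b
    rw [Finset.sum_congr rfl fun a _ => h3 a]
    rw [invNum, Finset.card_filter, Fintype.sum_prod_type]
  rw [e2, Nat.add_comm]

noncomputable def gsum (n : ℕ) (r s : ℂ) : ℂ :=
  ∑ σ : Equiv.Perm (Fin n), s ^ invNum σ * (r ^ (n * (n - 1) / 2) * ((r : ℂ) ^ invNum σ)⁻¹)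

lemma tri_succ (n : ℕ) : (n + 1) * ((n + 1) - 1) / 2 = n * (n - 1) / 2 + n := by
  have h1 : (n + 1) * ((n + 1) - 1) = n * (n - 1) + 2 * n := by
    cases n with
    | zero => rfl
    | succ m => simp only [Nat.add_sub_cancel]; ring
  rw [h1, Nat.add_mul_div_left _ _ (by norm_num : 0 < 2)]

lemma gsum_eq_qfact (n : ℕ) {r s : ℂ} (hr : r ≠ 0) (hsr : s ≠ r) :
    gsum n r s = qfact n r s := by
  induction n with
  | zero => simp [gsum, qfact, invNum]
  | succ n ih =>
    have hstep : ∑ j : Fin (n+1), s ^ (n - (j:ℕ)) * (r ^ n * ((r:ℂ) ^ (n - (j:ℕ)))⁻¹)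
        = (s ^ (n+1) - r ^ (n+1)) / (s - r) := by
      have h1 : ∀ j : Fin (n+1), s ^ (n - (j:ℕ)) * (r ^ n * ((r:ℂ) ^ (n - (j:ℕ)))⁻¹)
          = s ^ (n - (j:ℕ)) * r ^ (j:ℕ) := by
        intro j
        have hj : (r:ℂ) ^ n = r ^ (j:ℕ) * r ^ (n - (j:ℕ)) := by
          rw [← pow_add, Nat.add_sub_cancel' (Fin.is_le j)]
        rw [hj, mul_inv_cancel_right₀ (pow_ne_zero _ hr)]
      rw [Finset.sum_congr rfl fun j _ => h1 j]
      rw [Fin.sum_univ_eq_sum_range (fun i => s ^ (n - i) * r ^ i)]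
      have h2 : ∑ i ∈ Finset.range (n+1), s ^ (n - i) * r ^ i
          = ∑ i ∈ Finset.range (n+1), s ^ i * r ^ (n - i) := by
        rw [← Finset.sum_range_reflect (fun i => s ^ i * r ^ (n - i)) (n+1)]
        refine Finset.sum_congr rfl fun i hi => ?_
        rw [Finset.mem_range] at hi
        have : n + 1 - 1 - i = n - i := by omega
        rw [this, Nat.sub_sub_self (by omega : i ≤ n)]
      rw [h2, eq_div_iff (sub_ne_zero.mpr hsr)]
      have := geom_sum₂_mul s r (n+1)
      simpa using this
    have hbij := Fintype.sum_bijective _ (insPerm_bijective (n := n))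
      (fun p : Fin (n+1) × Equiv.Perm (Fin n) =>
        s ^ invNum (insPerm p.1 p.2) * (r ^ ((n+1) * ((n+1) - 1) / 2) * ((r:ℂ) ^ invNum (insPerm p.1 p.2))⁻¹))
      (fun σ => s ^ invNum σ * (r ^ ((n+1) * ((n+1) - 1) / 2) * ((r:ℂ) ^ invNum σ)⁻¹))
      (fun p => rfl)
    rw [gsum, ← hbij, Fintype.sum_prod_type]
    have hterm : ∀ (j : Fin (n+1)) (e : Equiv.Perm (Fin n)),
        s ^ invNum (insPerm j e) * (r ^ ((n+1) * ((n+1) - 1) / 2) * ((r:ℂ) ^ invNum (insPerm j e))⁻¹)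
        = (s ^ invNum e * (r ^ (n * (n - 1) / 2) * ((r:ℂ) ^ invNum e)⁻¹))
          * (s ^ (n - (j:ℕ)) * (r ^ n * ((r:ℂ) ^ (n - (j:ℕ)))⁻¹)) := by
      intro j e
      rw [invNum_insPerm, tri_succ, pow_add, pow_add, pow_add, mul_inv]
      ring
    rw [Finset.sum_congr rfl fun j _ => Finset.sum_congr rfl fun e _ => hterm j e]
    have : ∑ j : Fin (n+1), ∑ e : Equiv.Perm (Fin n),
        (s ^ invNum e * (r ^ (n * (n - 1) / 2) * ((r:ℂ) ^ invNum e)⁻¹))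
          * (s ^ (n - (j:ℕ)) * (r ^ n * ((r:ℂ) ^ (n - (j:ℕ)))⁻¹))
        = (∑ e : Equiv.Perm (Fin n), s ^ invNum e * (r ^ (n * (n - 1) / 2) * ((r:ℂ) ^ invNum e)⁻¹))
          * (∑ j : Fin (n+1), s ^ (n - (j:ℕ)) * (r ^ n * ((r:ℂ) ^ (n - (j:ℕ)))⁻¹)) := by
      rw [Finset.sum_mul_sum]
      rw [Finset.sum_comm]
    rw [this, hstep, ← gsum, ih]
    rw [qfact, qfact, Finset.prod_range_succ]

lemma s_ne_r_of_qfact {n : ℕ} {r s : ℂ} (hn : n ≠ 0) (hf : qfact n r s ≠ 0) : s ≠ r := by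
  intro hsr
  apply hf
  rw [qfact]
  apply Finset.prod_eq_zero (Finset.mem_range.mpr (Nat.pos_of_ne_zero hn))
  rw [hsr, sub_self, zero_div]

lemma neg_pow_mul_inv_neg_pow {r s : ℂ} (m : ℕ) :
    (-s) ^ m * ((-r) ^ m)⁻¹ = s ^ m * ((r : ℂ) ^ m)⁻¹ := by
  have h1 : ((-1 : ℂ) ^ m) ≠ 0 := pow_ne_zero _ (by norm_num)
  rw [neg_pow s m, neg_pow r m, mul_inv]
  field_simp

noncomputable def Wt (n : ℕ) (r s : ℂ) (x c : Fin n) : ℂ :=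
  if x = c then s else if c < x then r * s else 1

lemma Rmat_diag {n : ℕ} {r s : ℂ} (p : Fin n × Fin n) :
    Rmat n r s p p = Wt n r s p.1 p.2 := by
  unfold Rmat Wt
  have h2 : ¬(p = (p.2, p.1) ∧ p.2 < p.1) := by
    rintro ⟨h1, h2⟩
    rw [Prod.ext_iff] at h1
    rw [h1.1] at h2
    exact lt_irrefl _ h2
  rw [if_pos rfl, if_neg h2, add_zero]

lemma Rmat_ne_zero {n : ℕ} {r s : ℂ} {p q : Fin n × Fin n} (h : Rmat n r s p q ≠ 0) :
    q = p ∨ (q = (p.2, p.1) ∧ p.2 < p.1) := by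
  by_contra hc
  push_neg at hc
  apply h
  unfold Rmat
  rw [if_neg hc.1, if_neg, add_zero]
  rintro ⟨h1, h2⟩
  exact absurd h2 (not_lt.mpr (hc.2 h1))

lemma liftTwo_ne_zero {m : ℕ} {ι : Type*} [Fintype ι] [DecidableEq ι] {p q : ι}
    {B : Matrix (Fin m × Fin m) (Fin m × Fin m) ℂ} {f g : ι → Fin m}
    (h : liftTwo p q B f g ≠ 0) :
    B (f p, f q) (g p, g q) ≠ 0 ∧ ∀ x, x ≠ p → x ≠ q → f x = g x := by
  refine ⟨left_ne_zero_of_mul h, fun x hxp hxq => ?_⟩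
  by_contra hne
  apply h
  unfold liftTwo
  rw [Finset.prod_eq_zero (Finset.mem_univ x), mul_zero]
  rw [if_neg (by tauto), if_neg hne]

lemma liftTwo_apply_of_agree {m : ℕ} {ι : Type*} [Fintype ι] [DecidableEq ι] {p q : ι}
    {B : Matrix (Fin m × Fin m) (Fin m × Fin m) ℂ} {f g : ι → Fin m}
    (hagree : ∀ x, x ≠ p → x ≠ q → f x = g x) :
    liftTwo p q B f g = B (f p, f q) (g p, g q) := by
  unfold liftTwo
  rw [Finset.prod_eq_one, mul_one]
  intro x _
  by_cases hx : x = p ∨ x = q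
  · rw [if_pos hx]
  · push_neg at hx
    rw [if_neg (by tauto), if_pos (hagree x hx.1 hx.2)]

noncomputable def Tprod (n : ℕ) (r s : ℂ) (k : ℕ) :
    Matrix (Fin (n+1) → Fin n) (Fin (n+1) → Fin n) ℂ :=
  (((List.finRange n).map fun i =>
      liftTwo (Fin.castSucc i) (Fin.last n) (Rmat n r s)).take k).prod

lemma Tprod_zero {n : ℕ} {r s : ℂ} : Tprod n r s 0 = 1 := rfl

lemma Tprod_succ {n : ℕ} {r s : ℂ} {k : ℕ} (hk : k < n) :
    Tprod n r s (k+1) = Tprod n r s k *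
      liftTwo (Fin.castSucc (⟨k, hk⟩ : Fin n)) (Fin.last n) (Rmat n r s) := by
  unfold Tprod
  rw [List.take_succ, List.prod_append]
  congr 1
  have hlen : k < (((List.finRange n).map fun i =>
      liftTwo (Fin.castSucc i) (Fin.last n) (Rmat n r s))).length := by simp [hk]
  rw [List.getElem?_eq_getElem hlen]
  simp

lemma Tprod_top {n : ℕ} {r s : ℂ} :
    Tprod n r s n = ((List.finRange n).map fun i =>
      liftTwo (Fin.castSucc i) (Fin.last n) (Rmat n r s)).prod := by
  unfold Tprod
  rw [List.take_of_length_le (by simp)]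

lemma Tprod_support {n : ℕ} {r s : ℂ} (σ : Equiv.Perm (Fin n)) (a : Fin n) :
    ∀ (k : ℕ) (g : Fin (n+1) → Fin n),
      Tprod n r s k (Fin.snoc ⇑σ a) g ≠ 0 →
      (∀ j : Fin n, k ≤ (j:ℕ) → g (Fin.castSucc j) = σ j) ∧
      (∀ j : Fin n, (j:ℕ) < k → g (Fin.castSucc j) ≤ σ j) := by
  intro k
  induction k with
  | zero =>
    intro g hg
    rw [Tprod_zero, Matrix.one_apply] at hg
    have heq : (Fin.snoc ⇑σ a : Fin (n+1) → Fin n) = g := by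
      by_contra hne
      exact hg (if_neg hne)
    refine ⟨fun j _ => ?_, fun j hj => absurd hj (by omega)⟩
    rw [← heq, Fin.snoc_castSucc]
  | succ k ih =>
    intro g hg
    by_cases hkn : k < n
    · rw [Tprod_succ hkn, Matrix.mul_apply] at hg
      obtain ⟨g', -, hne⟩ := Finset.exists_ne_zero_of_sum_ne_zero hg
      obtain ⟨hTne, hRne⟩ := mul_ne_zero_iff.mp hne
      obtain ⟨ih1, ih2⟩ := ih g' hTne
      set kk : Fin n := ⟨k, hkn⟩ with hkk
      have hkkv : (kk : ℕ) = k := rfl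
      obtain ⟨hB, hoff⟩ := liftTwo_ne_zero hRne
      have hgk : g' (Fin.castSucc kk) = σ kk := ih1 kk le_rfl
      have hkey : g (Fin.castSucc kk) ≤ σ kk := by
        rcases Rmat_ne_zero hB with hdiag | ⟨hswap, hlt⟩
        · rw [Prod.ext_iff] at hdiag
          dsimp only at hdiag
          rw [hdiag.1, hgk]
        · rw [Prod.ext_iff] at hswap
          dsimp only at hswap
          dsimp only at hlt
          rw [hswap.1]
          exact le_of_lt (lt_of_lt_of_le hlt (le_of_eq hgk))
      constructor
      · intro j hj
        have hne1 : Fin.castSucc j ≠ Fin.castSucc kk := by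
          intro hc
          have := Fin.castSucc_inj.mp hc
          rw [Fin.ext_iff] at this
          omega
        rw [← hoff _ hne1 (Fin.castSucc_lt_last j).ne]
        exact ih1 j (by omega)
      · intro j hj
        by_cases hjk : (j:ℕ) < k
        · have hne1 : Fin.castSucc j ≠ Fin.castSucc kk := by
            intro hc
            have := Fin.castSucc_inj.mp hc
            rw [Fin.ext_iff] at this
            omega
          rw [← hoff _ hne1 (Fin.castSucc_lt_last j).ne]
          exact ih2 j hjk
        · have hj' : j = kk := Fin.ext (by omega)
          rw [hj']
          exact hkey
    · have heq : Tprod n r s (k+1) = Tprod n r s k := by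
        unfold Tprod
        rw [List.take_of_length_le (by simp; omega), List.take_of_length_le (by simp; omega)]
      rw [heq] at hg
      obtain ⟨h1, h2⟩ := ih g hg
      exact ⟨fun j hj => h1 j (by omega), fun j _ => h2 j (by have := j.isLt; omega)⟩

lemma Tprod_diag {n : ℕ} {r s : ℂ} (σ : Equiv.Perm (Fin n)) (a b : Fin n) :
    ∀ k : ℕ, Tprod n r s k (Fin.snoc ⇑σ a) (Fin.snoc ⇑σ b)
      = if a = b then
          ∏ j ∈ Finset.univ.filter (fun j : Fin n => (j:ℕ) < k), Wt n r s (σ j) a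
        else 0 := by
  intro k
  induction k with
  | zero =>
    rw [Tprod_zero, Matrix.one_apply]
    have hiff : (Fin.snoc ⇑σ a : Fin (n+1) → Fin n) = Fin.snoc ⇑σ b ↔ a = b := by
      constructor
      · intro h
        have := congrFun h (Fin.last n)
        simpa using this
      · rintro rfl; rfl
    by_cases hab : a = b
    · rw [if_pos (hiff.mpr hab), if_pos hab]
      have hfe : Finset.univ.filter (fun j : Fin n => (j:ℕ) < 0) = ∅ := by
        ext j; simp
      rw [hfe, Finset.prod_empty]
    · rw [if_neg (fun h => hab (hiff.mp h)), if_neg hab]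
  | succ k ih =>
    by_cases hkn : k < n
    case neg =>
      have heq : Tprod n r s (k+1) = Tprod n r s k := by
        unfold Tprod
        rw [List.take_of_length_le (by simp; omega), List.take_of_length_le (by simp; omega)]
      have hfeq : Finset.univ.filter (fun j : Fin n => (j:ℕ) < k + 1)
          = Finset.univ.filter (fun j : Fin n => (j:ℕ) < k) := by
        ext j
        have := j.isLt
        simp only [Finset.mem_filter, Finset.mem_univ, true_and]
        omega
      rw [heq, ih, hfeq]
    case pos =>
      set kk : Fin n := ⟨k, hkn⟩ with hkk
      have hkkv : (kk : ℕ) = k := rfl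
      rw [Tprod_succ hkn, Matrix.mul_apply]
      rw [Finset.sum_eq_single (Fin.snoc ⇑σ b)]
      · have hdiagR : liftTwo (Fin.castSucc kk) (Fin.last n) (Rmat n r s)
            (Fin.snoc ⇑σ b) (Fin.snoc ⇑σ b) = Wt n r s (σ kk) b := by
          rw [liftTwo_apply_of_agree (fun x _ _ => rfl)]
          rw [Fin.snoc_castSucc, Fin.snoc_last]
          exact Rmat_diag (σ kk, b)
        rw [hdiagR, ih]
        by_cases hab : a = b
        · subst hab
          rw [if_pos rfl, if_pos rfl]
          have hfs : Finset.univ.filter (fun j : Fin n => (j:ℕ) < k + 1)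
              = insert kk (Finset.univ.filter (fun j : Fin n => (j:ℕ) < k)) := by
            ext j
            simp only [Finset.mem_filter, Finset.mem_univ, true_and, Finset.mem_insert,
              Fin.ext_iff, hkkv]
            omega
          rw [hfs, Finset.prod_insert (by simp [hkkv])]
          ring
        · rw [if_neg hab, if_neg hab, zero_mul]
      · intro g' _ hne
        by_contra hc
        obtain ⟨hT, hR⟩ := mul_ne_zero_iff.mp hc
        obtain ⟨hB, hoff⟩ := liftTwo_ne_zero hR
        obtain ⟨s1, s2⟩ := Tprod_support σ a k g' hT
        have hgk : g' (Fin.castSucc kk) = σ kk := s1 kk le_rfl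
        rw [Fin.snoc_castSucc, Fin.snoc_last] at hB
        rcases Rmat_ne_zero hB with hdiag | ⟨hswap, hlt⟩
        · apply hne
          rw [Prod.ext_iff] at hdiag
          dsimp only at hdiag
          funext x
          refine Fin.lastCases ?_ (fun j => ?_) x
          · rw [Fin.snoc_last]
            exact hdiag.2.symm
          · rw [Fin.snoc_castSucc]
            by_cases hj : j = kk
            · subst hj
              exact hgk
            · rw [hoff _ (fun hc' => hj (Fin.castSucc_inj.mp hc')) (Fin.castSucc_lt_last j).ne,
                Fin.snoc_castSucc]
        · rw [Prod.ext_iff] at hswap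
          dsimp only at hswap hlt
          have heq2 : g' (Fin.castSucc kk) = g' (Fin.last n) := hgk.trans hswap.1
          rw [heq2] at hlt
          exact lt_irrefl _ hlt
      · intro hmem
        exact absurd (Finset.mem_univ _) hmem

lemma card_gt_filter {n : ℕ} (a : Fin n) :
    (Finset.univ.filter fun v : Fin n => a < v).card = n - 1 - (a:ℕ) := by
  have h : (Finset.univ.filter fun v : Fin n => a < v)
      = (Finset.univ.filter fun v : Fin n => ((a:ℕ)+1) ≤ (v:ℕ)) := by
    ext v
    simp only [Finset.mem_filter, Finset.mem_univ, true_and, Fin.lt_def]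
    omega
  rw [h, card_le_filter]
  omega

lemma prod_Wt {n : ℕ} {r s : ℂ} (σ : Equiv.Perm (Fin n)) (a : Fin n) :
    ∏ j : Fin n, Wt n r s (σ j) a = s * (r * s) ^ (n - 1 - (a:ℕ)) := by
  rw [Equiv.prod_comp σ (fun v => Wt n r s v a)]
  rw [← Finset.mul_prod_erase Finset.univ _ (Finset.mem_univ a)]
  have h1 : Wt n r s a a = s := by simp [Wt]
  have h2 : ∀ v ∈ Finset.univ.erase a, Wt n r s v a = if a < v then r*s else 1 := by
    intro v hv
    rw [Wt, if_neg (Finset.ne_of_mem_erase hv)]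
  rw [h1, Finset.prod_congr rfl h2, Finset.prod_ite, Finset.prod_const,
    Finset.prod_const_one, mul_one]
  have h3 : (Finset.univ.erase a).filter (fun v : Fin n => a < v)
      = Finset.univ.filter (fun v : Fin n => a < v) := by
    ext v
    simp only [Finset.mem_filter, Finset.mem_erase, Finset.mem_univ, true_and, and_true]
    exact ⟨fun h => h.2, fun h => ⟨ne_of_gt h, h⟩⟩
  rw [h3, card_gt_filter]

lemma Tprod_full {n : ℕ} {r s : ℂ} (σ τ : Equiv.Perm (Fin n)) (a b : Fin n) :
    Tprod n r s n (Fin.snoc ⇑σ a) (Fin.snoc ⇑τ b)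
      = if σ = τ ∧ a = b then s * (r*s) ^ (n - 1 - (a:ℕ)) else 0 := by
  by_cases hστ : σ = τ
  · subst hστ
    rw [Tprod_diag]
    have hfu : Finset.univ.filter (fun j : Fin n => (j:ℕ) < n) = Finset.univ := by
      ext j; simp [j.isLt]
    by_cases hab : a = b
    · rw [if_pos hab, if_pos ⟨rfl, hab⟩, hfu, prod_Wt]
    · rw [if_neg hab, if_neg (fun h => hab h.2)]
  · rw [if_neg (fun h => hστ h.1)]
    by_contra hne
    obtain ⟨-, h2⟩ := Tprod_support σ a n (Fin.snoc ⇑τ b) hne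
    have hle : ∀ j : Fin n, τ j ≤ σ j := fun j => by
      have := h2 j j.isLt
      rwa [Fin.snoc_castSucc] at this
    apply hστ
    have hsum : ∑ j, ((τ j : ℕ)) = ∑ j, ((σ j : ℕ)) := by
      rw [Equiv.sum_comp σ (fun v : Fin n => (v:ℕ)), Equiv.sum_comp τ (fun v : Fin n => (v:ℕ))]
    have hval : ∀ j ∈ Finset.univ, ((τ j : ℕ)) ≤ ((σ j : ℕ)) := fun j _ => hle j
    have hpt := (Finset.sum_eq_sum_iff_of_le hval).mp hsum
    exact Equiv.ext fun j => Fin.ext (hpt j (Finset.mem_univ j)).symm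

lemma sum_snoc {n : ℕ} {M : Type*} [AddCommMonoid M] (F : (Fin (n+1) → Fin n) → M) :
    ∑ g : Fin (n+1) → Fin n, F g
      = ∑ u : Fin n → Fin n, ∑ c : Fin n, F (Fin.snoc u c) := by
  rw [← (Fin.snocEquiv (fun _ => Fin n)).sum_comp F, Fintype.sum_prod_type, Finset.sum_comm]
  rfl

lemma collapse {n : ℕ} (w : Equiv.Perm (Fin n) → ℂ) (G : (Fin n → Fin n) → ℂ) :
    ∑ u : Fin n → Fin n, (∑ σ : Equiv.Perm (Fin n), if u = ⇑σ then w σ else 0) * G u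
      = ∑ σ : Equiv.Perm (Fin n), w σ * G ⇑σ := by
  have h1 : ∀ u, (∑ σ : Equiv.Perm (Fin n), if u = ⇑σ then w σ else 0) * G u
      = ∑ σ : Equiv.Perm (Fin n), if u = ⇑σ then w σ * G u else 0 := by
    intro u
    rw [Finset.sum_mul]
    exact Finset.sum_congr rfl fun σ _ => by rw [ite_mul, zero_mul]
  rw [Finset.sum_congr rfl fun u _ => h1 u, Finset.sum_comm]
  refine Finset.sum_congr rfl fun σ _ => ?_
  rw [Finset.sum_ite_eq' Finset.univ (⇑σ) (fun u => w σ * G u)]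
  simp

lemma pairing' (n : ℕ) {r s : ℂ} (hr : r ≠ 0) (hf : qfact n r s ≠ 0) :
    (qfact n r s)⁻¹ * (r ^ (n * (n - 1) / 2) *
      ∑ σ : Equiv.Perm (Fin n), (-s) ^ invNum σ * ((-r) ^ invNum σ)⁻¹) = 1 := by
  have h1 : r ^ (n * (n - 1) / 2) *
      ∑ σ : Equiv.Perm (Fin n), (-s) ^ invNum σ * ((-r) ^ invNum σ)⁻¹ = gsum n r s := by
    rw [Finset.mul_sum, gsum]
    exact Finset.sum_congr rfl fun σ _ => by rw [neg_pow_mul_inv_neg_pow]; ring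
  rw [h1]
  rcases Nat.eq_zero_or_pos n with hn | hn
  · subst hn
    simp [gsum, qfact, invNum]
  · rw [gsum_eq_qfact n hr (s_ne_r_of_qfact (Nat.pos_iff_ne_zero.mp hn) hf),
      inv_mul_cancel₀ hf]

lemma middle {n : ℕ} {r s : ℂ} (hr : r ≠ 0) (hf : qfact n r s ≠ 0) (a b : Fin n) :
    ∑ u : Fin n → Fin n, ∑ v : Fin n → Fin n,
      epsCov n r s u * epsVec n r s v * Tprod n r s n (Fin.snoc u a) (Fin.snoc v b)
    = if a = b then s * (r*s) ^ (n - 1 - (a:ℕ)) else 0 := by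
  unfold epsCov epsVec
  have h1 : ∀ u : Fin n → Fin n,
      ∑ v : Fin n → Fin n,
        ((qfact n r s)⁻¹ * ∑ σ : Equiv.Perm (Fin n), if u = ⇑σ then (-s) ^ invNum σ else 0)
          * (r ^ (n * (n - 1) / 2) * ∑ τ : Equiv.Perm (Fin n), if v = ⇑τ then ((-r) ^ invNum τ)⁻¹ else 0)
          * Tprod n r s n (Fin.snoc u a) (Fin.snoc v b)
      = (qfact n r s)⁻¹ * r ^ (n * (n - 1) / 2) *
          ((∑ σ : Equiv.Perm (Fin n), if u = ⇑σ then (-s) ^ invNum σ else 0) *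
            (∑ v : Fin n → Fin n,
              (∑ τ : Equiv.Perm (Fin n), if v = ⇑τ then ((-r) ^ invNum τ)⁻¹ else 0)
                * Tprod n r s n (Fin.snoc u a) (Fin.snoc v b))) := by
    intro u
    conv_rhs => rw [Finset.mul_sum, Finset.mul_sum]
    refine Finset.sum_congr rfl fun v _ => by ring
  rw [Finset.sum_congr rfl fun u _ => h1 u, ← Finset.mul_sum]
  have h2 : ∀ u : Fin n → Fin n,
      (∑ v : Fin n → Fin n,
        (∑ τ : Equiv.Perm (Fin n), if v = ⇑τ then ((-r) ^ invNum τ)⁻¹ else 0)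
          * Tprod n r s n (Fin.snoc u a) (Fin.snoc v b))
      = ∑ τ : Equiv.Perm (Fin n), ((-r) ^ invNum τ)⁻¹ * Tprod n r s n (Fin.snoc u a) (Fin.snoc ⇑τ b) := by
    intro u
    exact collapse _ _
  have h3 : ∑ u : Fin n → Fin n,
      (∑ σ : Equiv.Perm (Fin n), if u = ⇑σ then (-s) ^ invNum σ else 0) *
        (∑ v : Fin n → Fin n,
          (∑ τ : Equiv.Perm (Fin n), if v = ⇑τ then ((-r) ^ invNum τ)⁻¹ else 0)
            * Tprod n r s n (Fin.snoc u a) (Fin.snoc v b))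
      = ∑ σ : Equiv.Perm (Fin n), (-s) ^ invNum σ *
          ∑ τ : Equiv.Perm (Fin n), ((-r) ^ invNum τ)⁻¹
            * Tprod n r s n (Fin.snoc ⇑σ a) (Fin.snoc ⇑τ b) := by
    rw [Finset.sum_congr rfl fun u _ => by rw [h2 u]]
    exact collapse _ _
  rw [h3]
  have h4 : ∀ σ : Equiv.Perm (Fin n),
      ∑ τ : Equiv.Perm (Fin n), ((-r) ^ invNum τ)⁻¹
          * Tprod n r s n (Fin.snoc ⇑σ a) (Fin.snoc ⇑τ b)
      = ((-r) ^ invNum σ)⁻¹ * (if a = b then s * (r*s) ^ (n - 1 - (a:ℕ)) else 0) := by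
    intro σ
    have h5 : ∀ τ : Equiv.Perm (Fin n),
        ((-r) ^ invNum τ)⁻¹ * Tprod n r s n (Fin.snoc ⇑σ a) (Fin.snoc ⇑τ b)
        = if τ = σ then ((-r) ^ invNum τ)⁻¹ * (if a = b then s * (r*s) ^ (n - 1 - (a:ℕ)) else 0)
          else 0 := by
      intro τ
      rw [Tprod_full]
      by_cases hτ : τ = σ
      · subst hτ
        rw [if_pos rfl]
        by_cases hab : a = b
        · rw [if_pos ⟨rfl, hab⟩, if_pos hab]
        · rw [if_neg (fun hh => hab hh.2), if_neg hab, mul_zero]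
      · rw [if_neg hτ, if_neg (fun hh => hτ hh.1.symm), mul_zero]
    rw [Finset.sum_congr rfl fun τ _ => h5 τ, Finset.sum_ite_eq' Finset.univ σ]
    simp
  rw [Finset.sum_congr rfl fun σ _ => by rw [h4 σ]]
  have h6 : ∑ σ : Equiv.Perm (Fin n),
      (-s) ^ invNum σ * (((-r) ^ invNum σ)⁻¹ * (if a = b then s * (r*s) ^ (n - 1 - (a:ℕ)) else 0))
      = (∑ σ : Equiv.Perm (Fin n), (-s) ^ invNum σ * ((-r) ^ invNum σ)⁻¹)
        * (if a = b then s * (r*s) ^ (n - 1 - (a:ℕ)) else 0) := by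
    rw [Finset.sum_mul]
    exact Finset.sum_congr rfl fun σ _ => by ring
  rw [h6]
  have := pairing' n hr hf
  calc (qfact n r s)⁻¹ * r ^ (n * (n - 1) / 2) *
        ((∑ σ : Equiv.Perm (Fin n), (-s) ^ invNum σ * ((-r) ^ invNum σ)⁻¹)
          * (if a = b then s * (r*s) ^ (n - 1 - (a:ℕ)) else 0))
      = ((qfact n r s)⁻¹ * (r ^ (n * (n - 1) / 2) *
          ∑ σ : Equiv.Perm (Fin n), (-s) ^ invNum σ * ((-r) ^ invNum σ)⁻¹))
          * (if a = b then s * (r*s) ^ (n - 1 - (a:ℕ)) else 0) := by ring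
    _ = if a = b then s * (r*s) ^ (n - 1 - (a:ℕ)) else 0 := by rw [this, one_mul]

lemma snoc_comp_castSucc {n : ℕ} (u : Fin n → Fin n) (c : Fin n) :
    (Fin.snoc u c : Fin (n+1) → Fin n) ∘ Fin.castSucc = u := by
  funext j
  simp [Function.comp]


/-- on `V^{⊗(n+1)}`,
`(Aₙ⊗1) R_{1,n+1} ⋯ R_{n,n+1} (Aₙ⊗1) = s ⬝ M_{n+1} (Aₙ⊗1)`. -/
theorem stmt12 (n : ℕ) (r s : ℂ) (hr : r ≠ 0) (hs : s ≠ 0)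
    (hf : qfact n r s ≠ 0) :
    AmatExt n r s *
        ((List.finRange n).map fun i =>
          liftTwo (Fin.castSucc i) (Fin.last n) (Rmat n r s)).prod *
        AmatExt n r s
      = s • (MmatExt n r s * AmatExt n r s) := by
  rw [show ((List.finRange n).map fun i =>
      liftTwo (Fin.castSucc i) (Fin.last n) (Rmat n r s)).prod = Tprod n r s n from
      Tprod_top.symm]
  ext f h
  have hR : (s • (MmatExt n r s * AmatExt n r s)) f h
      = s * ((r*s) ^ (n - 1 - (f (Fin.last n) : ℕ)) * AmatExt n r s f h) := by
    rw [Matrix.smul_apply, Matrix.mul_apply, smul_eq_mul]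
    congr 1
    have h0 : ∀ g, MmatExt n r s f g * AmatExt n r s g h
        = if f = g then (r*s) ^ (n - 1 - (f (Fin.last n) : ℕ)) * AmatExt n r s g h else 0 := by
      intro g
      unfold MmatExt
      rw [ite_mul, zero_mul]
    rw [Finset.sum_congr rfl fun g _ => h0 g, Finset.sum_ite_eq Finset.univ f]
    simp
  rw [hR]
  have hL1 : (AmatExt n r s * Tprod n r s n * AmatExt n r s) f h
      = ∑ g' : Fin (n+1) → Fin n, ∑ g : Fin (n+1) → Fin n,
          AmatExt n r s f g * Tprod n r s n g g' * AmatExt n r s g' h := by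
    rw [Matrix.mul_apply]
    refine Finset.sum_congr rfl fun g' _ => ?_
    rw [Matrix.mul_apply, Finset.sum_mul]
  rw [hL1]
  have hL2 : ∑ g' : Fin (n+1) → Fin n, ∑ g : Fin (n+1) → Fin n,
        AmatExt n r s f g * Tprod n r s n g g' * AmatExt n r s g' h
      = ∑ u' : Fin n → Fin n, ∑ c' : Fin n, ∑ u : Fin n → Fin n, ∑ c : Fin n,
          AmatExt n r s f (Fin.snoc u c) * Tprod n r s n (Fin.snoc u c) (Fin.snoc u' c')
            * AmatExt n r s (Fin.snoc u' c') h := by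
    rw [sum_snoc]
    exact Finset.sum_congr rfl fun u' _ => Finset.sum_congr rfl fun c' _ => sum_snoc _
  rw [hL2]
  have hA1 : ∀ (u : Fin n → Fin n) (c : Fin n), AmatExt n r s f (Fin.snoc u c)
      = epsVec n r s (f ∘ Fin.castSucc) * epsCov n r s u
          * (if f (Fin.last n) = c then 1 else 0) := by
    intro u c
    unfold AmatExt
    rw [snoc_comp_castSucc, Fin.snoc_last]
  have hA2 : ∀ (u' : Fin n → Fin n) (c' : Fin n), AmatExt n r s (Fin.snoc u' c') h
      = epsVec n r s u' * epsCov n r s (h ∘ Fin.castSucc)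
          * (if c' = h (Fin.last n) then 1 else 0) := by
    intro u' c'
    unfold AmatExt
    rw [snoc_comp_castSucc, Fin.snoc_last]
  have hc1 : ∀ (u' : Fin n → Fin n) (c' : Fin n) (u : Fin n → Fin n),
      ∑ c : Fin n, AmatExt n r s f (Fin.snoc u c) * Tprod n r s n (Fin.snoc u c) (Fin.snoc u' c')
          * AmatExt n r s (Fin.snoc u' c') h
      = epsVec n r s (f ∘ Fin.castSucc) * epsCov n r s u
          * Tprod n r s n (Fin.snoc u (f (Fin.last n))) (Fin.snoc u' c')
          * AmatExt n r s (Fin.snoc u' c') h := by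
    intro u' c' u
    have hterm : ∀ c : Fin n,
        AmatExt n r s f (Fin.snoc u c) * Tprod n r s n (Fin.snoc u c) (Fin.snoc u' c')
          * AmatExt n r s (Fin.snoc u' c') h
        = if f (Fin.last n) = c then
            epsVec n r s (f ∘ Fin.castSucc) * epsCov n r s u
              * Tprod n r s n (Fin.snoc u c) (Fin.snoc u' c')
              * AmatExt n r s (Fin.snoc u' c') h
          else 0 := by
      intro c
      rw [hA1]
      split_ifs <;> ring
    rw [Finset.sum_congr rfl fun c _ => hterm c, Finset.sum_ite_eq Finset.univ (f (Fin.last n))]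
    simp
  rw [Finset.sum_congr rfl fun u' _ => Finset.sum_congr rfl fun c' _ =>
    Finset.sum_congr rfl fun u _ => hc1 u' c' u]
  have hc2 : ∀ u' : Fin n → Fin n,
      ∑ c' : Fin n, ∑ u : Fin n → Fin n,
        epsVec n r s (f ∘ Fin.castSucc) * epsCov n r s u
          * Tprod n r s n (Fin.snoc u (f (Fin.last n))) (Fin.snoc u' c')
          * AmatExt n r s (Fin.snoc u' c') h
      = ∑ u : Fin n → Fin n,
          epsVec n r s (f ∘ Fin.castSucc) * epsCov n r s u
            * Tprod n r s n (Fin.snoc u (f (Fin.last n))) (Fin.snoc u' (h (Fin.last n)))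
            * (epsVec n r s u' * epsCov n r s (h ∘ Fin.castSucc)) := by
    intro u'
    have hterm : ∀ (c' : Fin n) (u : Fin n → Fin n),
        epsVec n r s (f ∘ Fin.castSucc) * epsCov n r s u
          * Tprod n r s n (Fin.snoc u (f (Fin.last n))) (Fin.snoc u' c')
          * AmatExt n r s (Fin.snoc u' c') h
        = if c' = h (Fin.last n) then
            epsVec n r s (f ∘ Fin.castSucc) * epsCov n r s u
              * Tprod n r s n (Fin.snoc u (f (Fin.last n))) (Fin.snoc u' c')
              * (epsVec n r s u' * epsCov n r s (h ∘ Fin.castSucc))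
          else 0 := by
      intro c' u
      rw [hA2]
      split_ifs <;> ring
    rw [Finset.sum_congr rfl fun c' _ => Finset.sum_congr rfl fun u _ => hterm c' u]
    rw [Finset.sum_comm]
    refine Finset.sum_congr rfl fun u _ => ?_
    rw [Finset.sum_ite_eq' Finset.univ (h (Fin.last n))]
    simp
  rw [Finset.sum_congr rfl fun u' _ => hc2 u']
  have hc3 : ∑ u' : Fin n → Fin n, ∑ u : Fin n → Fin n,
        epsVec n r s (f ∘ Fin.castSucc) * epsCov n r s u
          * Tprod n r s n (Fin.snoc u (f (Fin.last n))) (Fin.snoc u' (h (Fin.last n)))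
          * (epsVec n r s u' * epsCov n r s (h ∘ Fin.castSucc))
      = epsVec n r s (f ∘ Fin.castSucc) * epsCov n r s (h ∘ Fin.castSucc)
          * ∑ u : Fin n → Fin n, ∑ u' : Fin n → Fin n,
              epsCov n r s u * epsVec n r s u'
                * Tprod n r s n (Fin.snoc u (f (Fin.last n))) (Fin.snoc u' (h (Fin.last n))) := by
    rw [Finset.sum_comm]
    conv_rhs => rw [Finset.mul_sum]
    refine Finset.sum_congr rfl fun u _ => ?_
    conv_rhs => rw [Finset.mul_sum]
    refine Finset.sum_congr rfl fun u' _ => by ring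
  rw [hc3]
  have hmid := middle (r := r) (s := s) hr hf (f (Fin.last n)) (h (Fin.last n))
  rw [hmid]
  unfold AmatExt
  by_cases hab : f (Fin.last n) = h (Fin.last n)
  · rw [if_pos hab, if_pos hab, hab]
    ring
  · rw [if_neg hab, if_neg hab]
    ring
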